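/- Let S be an inverse semigroup, τ a congruence on E(S), N = N(τ), and ψ = { (a,b) ∈ N × N : a⁻¹a τ b⁻¹b and ab⁻¹ ∈ C(τ) }. Then ψ is a two-sided congruence on the inverse semigroup N. -/
import Mathlib


class InverseSemigroup (S : Type*) extends Semigroup S where
  inv : S → S
  mul_inv_mul : ∀ a : S, a * inv a * a = a
  inv_mul_inv : ∀ a : S, inv a * a * inv a = inv a
  inv_unique : ∀ a b : S, a * b * a = a → b * a * b = b → b = inv a

open InverseSemigroup

/-- `e` is an idempotent. -/
def IsIdem {S : Type*} [Mul S] (e : S) : Prop := e * e = e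

/-- `r` is a left congruence: an equivalence relation compatible with left multiplication. -/
def IsLeftCongruence {S : Type*} [Semigroup S] (r : S → S → Prop) : Prop :=
  Equivalence r ∧ ∀ a b c : S, r a b → r (c * a) (c * b)

/-- The inverse kernel of a relation: elements related to `a * a⁻¹`. -/
def InK {S : Type*} [InverseSemigroup S] (r : S → S → Prop) : Set S :=
  {a | r a (a * inv a)}

/-- The kernel: elements related to some idempotent. -/
def lker {S : Type*} [InverseSemigroup S] (r : S → S → Prop) : Set S :=
  {a | ∃ e, IsIdem e ∧ r a e}

/-- `τ` is a congruence on the semilattice of idempotents `E(S)`. -/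
def IsECong {S : Type*} [InverseSemigroup S] (τ : S → S → Prop) : Prop :=
  (∀ e f, τ e f → IsIdem e ∧ IsIdem f) ∧
  (∀ e, IsIdem e → τ e e) ∧
  (∀ e f, τ e f → τ f e) ∧
  (∀ e f g, τ e f → τ f g → τ e g) ∧
  (∀ e f g, IsIdem g → τ e f → τ (g * e) (g * f))

/-- The normaliser of a congruence on the idempotents. -/
def normaliser {S : Type*} [InverseSemigroup S] (τ : S → S → Prop) : Set S :=
  {a | ∀ e f, τ e f → τ (a * e * inv a) (a * f * inv a) ∧ τ (inv a * e * a) (inv a * f * a)}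

/-- `T` is a full inverse subsemigroup of `S`. -/
def IsFullInverseSub {S : Type*} [InverseSemigroup S] (T : Set S) : Prop :=
  (∀ e : S, IsIdem e → e ∈ T) ∧ (∀ a b, a ∈ T → b ∈ T → a * b ∈ T) ∧
  (∀ a, a ∈ T → inv a ∈ T)

/-- The centraliser of a congruence on the idempotents. -/
def centraliser {S : Type*} [InverseSemigroup S] (τ : S → S → Prop) : Set S :=
  {a | a ∈ normaliser τ ∧ ∃ e, IsIdem e ∧ τ e (InverseSemigroup.inv a * a) ∧ a * e = e}

namespace InvAux
open InverseSemigroup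
variable {S : Type*} [InverseSemigroup S]

lemma inv_inv' (a : S) : inv (inv a) = a :=
  (inv_unique (inv a) a (inv_mul_inv a) (mul_inv_mul a)).symm

lemma idem_dup {e : S} (h : IsIdem e) (t : S) : e * (e * t) = e * t := by
  rw [← mul_assoc, h]

lemma mcomm {e f : S} (h : e * f = f * e) (t : S) : e * (f * t) = f * (e * t) := by
  rw [← mul_assoc, h, mul_assoc]

lemma idem_inv_eq {e : S} (h : IsIdem e) : inv e = e :=
  (inv_unique e e (by rw [h, h]) (by rw [h, h])).symm

lemma mul_idem {e f : S} (he : IsIdem e) (hf : IsIdem f) : IsIdem (e * f) := by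
  set x := inv (e * f) with hx
  have h1 : (e * f) * x * (e * f) = e * f := mul_inv_mul _
  have h2 : x * (e * f) * x = x := inv_mul_inv _
  simp only [mul_assoc] at h1 h2
  have h2' : x * (e * (f * (x * e))) = x * e := by
    have := congrArg (· * e) h2
    simpa only [mul_assoc] using this
  have hA : f * x * e = x := by
    have p : (e * f) * (f * x * e) * (e * f) = e * f := by
      simp only [mul_assoc, idem_dup hf, idem_dup he]; exact h1
    have q : (f * x * e) * (e * f) * (f * x * e) = f * x * e := by
      simp only [mul_assoc, idem_dup hf, idem_dup he]
      rw [h2']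
    exact (inv_unique (e * f) (f * x * e) p q).trans hx.symm
  have hq : (f * x * e) * (f * x * e) = f * x * e := by
    simp only [mul_assoc]; rw [h2']
  rw [hA] at hq
  have hxi : IsIdem x := hq
  have hef : e * f = inv x := inv_unique x (e * f)
    (by simp only [mul_assoc]; exact h2) (by simp only [mul_assoc]; exact h1)
  rw [hef, idem_inv_eq hxi]; exact hxi

lemma idem_comm {e f : S} (he : IsIdem e) (hf : IsIdem f) : e * f = f * e := by
  have hef := mul_idem he hf
  have hfe := mul_idem hf he
  have p : (e * f) * (f * e) * (e * f) = e * f := by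
    simp only [mul_assoc, idem_dup hf, idem_dup he]
    simpa only [IsIdem, mul_assoc] using hef
  have q : (f * e) * (e * f) * (f * e) = f * e := by
    simp only [mul_assoc, idem_dup hf, idem_dup he]
    simpa only [IsIdem, mul_assoc] using hfe
  have := inv_unique (e * f) (f * e) p q
  rw [this, idem_inv_eq hef]

end InvAux

namespace Part2
open InverseSemigroup InvAux
variable {S : Type*} [InverseSemigroup S]

lemma idem_mul_inv (a : S) : IsIdem (a * inv a) := by
  show a * inv a * (a * inv a) = a * inv a
  rw [← mul_assoc, mul_inv_mul]

lemma idem_inv_mul (a : S) : IsIdem (inv a * a) := by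
  show inv a * a * (inv a * a) = inv a * a
  rw [← mul_assoc, inv_mul_inv]

lemma sand1e (a : S) : a * (inv a * a) = a := by rw [← mul_assoc, mul_inv_mul]
lemma sand2e (a : S) : inv a * (a * inv a) = inv a := by rw [← mul_assoc, inv_mul_inv]
lemma sand1 (a t : S) : a * (inv a * (a * t)) = a * t := by
  rw [← mul_assoc, ← mul_assoc, mul_inv_mul]
lemma sand2 (a t : S) : inv a * (a * (inv a * t)) = inv a * t := by
  rw [← mul_assoc, ← mul_assoc, inv_mul_inv]

lemma inv_rev (a b : S) : inv (a * b) = inv b * inv a := by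
  refine (inv_unique (a * b) (inv b * inv a) ?_ ?_).symm
  · calc a * b * (inv b * inv a) * (a * b)
        = a * ((b * inv b) * (inv a * a)) * b := by simp only [mul_assoc]
      _ = a * ((inv a * a) * (b * inv b)) * b := by
          rw [idem_comm (idem_mul_inv b) (idem_inv_mul a)]
      _ = (a * inv a * a) * (b * inv b * b) := by simp only [mul_assoc]
      _ = a * b := by rw [mul_inv_mul, mul_inv_mul]
  · calc inv b * inv a * (a * b) * (inv b * inv a)
        = inv b * ((inv a * a) * (b * inv b)) * inv a := by simp only [mul_assoc]
      _ = inv b * ((b * inv b) * (inv a * a)) * inv a := by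
          rw [idem_comm (idem_inv_mul a) (idem_mul_inv b)]
      _ = (inv b * b * inv b) * (inv a * a * inv a) := by simp only [mul_assoc]
      _ = inv b * inv a := by rw [inv_mul_inv, inv_mul_inv]

lemma idem_conj {e : S} (he : IsIdem e) (a : S) : IsIdem (a * e * inv a) := by
  show a * e * inv a * (a * e * inv a) = a * e * inv a
  calc a * e * inv a * (a * e * inv a)
      = a * (e * (inv a * a)) * (e * inv a) := by simp only [mul_assoc]
    _ = a * ((inv a * a) * e) * (e * inv a) := by rw [idem_comm he (idem_inv_mul a)]
    _ = (a * inv a * a) * (e * (e * inv a)) := by simp only [mul_assoc]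
    _ = a * (e * (e * inv a)) := by rw [mul_inv_mul]
    _ = a * (e * inv a) := by rw [idem_dup he]
    _ = a * e * inv a := by simp only [mul_assoc]

lemma fix_below {a e g : S} (hae : a * e = e) (he : IsIdem e) (hg : IsIdem g) :
    a * (g * e) = g * e := by
  have h1 : e * (g * e) = g * e := by
    calc e * (g * e) = (e * g) * e := (mul_assoc _ _ _).symm
      _ = (g * e) * e := by rw [idem_comm he hg]
      _ = g * (e * e) := mul_assoc _ _ _
      _ = g * e := by rw [he]
  calc a * (g * e) = a * (e * (g * e)) := by rw [h1]
    _ = (a * e) * (g * e) := by rw [← mul_assoc]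
    _ = e * (g * e) := by rw [hae]
    _ = g * e := h1

lemma einv_of {a e : S} (he : IsIdem e) (hae : a * e = e) : e * inv a = e := by
  have h := congrArg inv hae
  rw [inv_rev, idem_inv_eq he] at h
  exact h

lemma inv_fix_of {a e : S} (he : IsIdem e) (hae : a * e = e) : inv a * e = e := by
  have h1 : inv a * (e * inv a) = e * inv a := by
    calc inv a * (e * inv a) = inv a * (a * e * inv a) := by rw [hae]
      _ = ((inv a * a) * e) * inv a := by simp only [mul_assoc]
      _ = (e * (inv a * a)) * inv a := by rw [idem_comm (idem_inv_mul a) he]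
      _ = e * (inv a * (a * inv a)) := by simp only [mul_assoc]
      _ = e * inv a := by rw [sand2e]
  rw [← einv_of he hae]
  exact h1

end Part2

namespace Part3
open InverseSemigroup InvAux Part2
variable {S : Type*} [InverseSemigroup S] {τ : S → S → Prop}

lemma tidl (hτ : IsECong τ) {e f : S} (h : τ e f) : IsIdem e := (hτ.1 e f h).1
lemma tidr (hτ : IsECong τ) {e f : S} (h : τ e f) : IsIdem f := (hτ.1 e f h).2
lemma trefl (hτ : IsECong τ) {e : S} (h : IsIdem e) : τ e e := hτ.2.1 e h
lemma tsymm (hτ : IsECong τ) {e f : S} (h : τ e f) : τ f e := hτ.2.2.1 e f h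
lemma ttrans (hτ : IsECong τ) {e f g : S} (h : τ e f) (h' : τ f g) : τ e g :=
  hτ.2.2.2.1 e f g h h'
lemma tmull (hτ : IsECong τ) {e f : S} (g : S) (hg : IsIdem g) (h : τ e f) :
    τ (g * e) (g * f) := hτ.2.2.2.2 e f g hg h
lemma tmulr (hτ : IsECong τ) {e f : S} (g : S) (hg : IsIdem g) (h : τ e f) :
    τ (e * g) (f * g) := by
  rw [idem_comm (tidl hτ h) hg, idem_comm (tidr hτ h) hg]
  exact tmull hτ g hg h

lemma idem_mem_norm (hτ : IsECong τ) {g : S} (hg : IsIdem g) : g ∈ normaliser τ := by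
  intro e f h
  have key : ∀ e' : S, IsIdem e' → g * e' * g = g * e' := by
    intro e' he'
    calc g * e' * g = g * (e' * g) := mul_assoc _ _ _
      _ = g * (g * e') := by rw [idem_comm he' hg]
      _ = g * e' := idem_dup hg e'
  constructor
  · rw [idem_inv_eq hg, key e (tidl hτ h), key f (tidr hτ h)]
    exact tmull hτ g hg h
  · rw [idem_inv_eq hg, key e (tidl hτ h), key f (tidr hτ h)]
    exact tmull hτ g hg h

lemma norm_mul {a b : S} (ha : a ∈ normaliser τ) (hb : b ∈ normaliser τ) :
    a * b ∈ normaliser τ := by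
  intro e f h
  constructor
  · have h2 := (ha _ _ (hb e f h).1).1
    simpa only [inv_rev, mul_assoc] using h2
  · have h2 := (hb _ _ (ha e f h).2).2
    simpa only [inv_rev, mul_assoc] using h2

lemma norm_inv {a : S} (ha : a ∈ normaliser τ) : inv a ∈ normaliser τ := by
  intro e f h
  refine ⟨?_, ?_⟩
  · have := (ha e f h).2; simpa only [inv_inv'] using this
  · have := (ha e f h).1; simpa only [inv_inv'] using this

lemma cent_norm {a : S} (ha : a ∈ centraliser τ) : a ∈ normaliser τ := ha.1

lemma idem_mem_cent (hτ : IsECong τ) {g : S} (hg : IsIdem g) : g ∈ centraliser τ := by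
  refine ⟨idem_mem_norm hτ hg, g, hg, ?_, hg⟩
  rw [idem_inv_eq hg, hg]
  exact trefl hτ hg

end Part3

namespace Part4
open InverseSemigroup InvAux Part2 Part3
variable {S : Type*} [InverseSemigroup S] {τ : S → S → Prop}

lemma tau_e_mulinv (hτ : IsECong τ) {a e : S} (haN : a ∈ normaliser τ)
    (he : IsIdem e) (hτe : τ e (inv a * a)) (hae : a * e = e) : τ e (a * inv a) := by
  have h := (haN _ _ hτe).1
  have l1 : a * e * inv a = e := by rw [hae]; exact einv_of he hae
  have l2 : a * (inv a * a) * inv a = a * inv a := by rw [← mul_assoc, mul_inv_mul]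
  rw [l1, l2] at h
  exact h

lemma cent_inv (hτ : IsECong τ) {a : S} (ha : a ∈ centraliser τ) :
    inv a ∈ centraliser τ := by
  obtain ⟨haN, e, he, hτe, hae⟩ := ha
  refine ⟨norm_inv haN, e, he, ?_, inv_fix_of he hae⟩
  rw [inv_inv']
  exact tau_e_mulinv hτ haN he hτe hae

lemma centK1 (hτ : IsECong τ) {a : S} (ha : a ∈ centraliser τ) {h : S} (hh : IsIdem h) :
    τ (a * h * inv a) (h * (a * inv a)) := by
  obtain ⟨haN, e, he, hτe, hae⟩ := ha
  have hma := tau_e_mulinv hτ haN he hτe hae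
  have hidem := idem_conj hh a
  have c1 := tmull hτ (a * h * inv a) hidem (tsymm hτ hma)
  have l1 : (a * h * inv a) * (a * inv a) = a * h * inv a := by
    calc (a * h * inv a) * (a * inv a) = a * (h * (inv a * (a * inv a))) := by
          simp only [mul_assoc]
      _ = a * (h * inv a) := by rw [sand2e]
      _ = a * h * inv a := by simp only [mul_assoc]
  have l2 : (a * h * inv a) * e = h * e := by
    calc (a * h * inv a) * e = a * (h * (inv a * e)) := by simp only [mul_assoc]
      _ = a * (h * e) := by rw [inv_fix_of he hae]
      _ = h * e := fix_below hae he hh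
  rw [l1, l2] at c1
  have c2 := tmull hτ h hh (tsymm hτ hma)
  exact ttrans hτ c1 (tsymm hτ c2)

lemma centK2 (hτ : IsECong τ) {a : S} (ha : a ∈ centraliser τ) {h : S} (hh : IsIdem h) :
    τ (inv a * h * a) (h * (inv a * a)) := by
  have := centK1 hτ (cent_inv hτ ha) hh
  rwa [inv_inv'] at this

lemma cent_mul (hτ : IsECong τ) {a b : S} (ha : a ∈ centraliser τ)
    (hb : b ∈ centraliser τ) : a * b ∈ centraliser τ := by
  obtain ⟨haN, e, he, hτe, hae⟩ := ha
  obtain ⟨hbN, f, hf, hτf, hbf⟩ := hb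
  refine ⟨norm_mul haN hbN, e * f, mul_idem he hf, ?_, ?_⟩
  · have t1 := (hbN _ _ hτe).2
    have t2 := tmulr hτ f hf t1
    have l3 : (inv b * e * b) * f = e * f := by
      calc (inv b * e * b) * f = inv b * (e * (b * f)) := by simp only [mul_assoc]
        _ = inv b * (e * f) := by rw [hbf]
        _ = e * f := fix_below (inv_fix_of hf hbf) hf he
    have hg0 : IsIdem (inv b * (inv a * a) * b) := by
      have := idem_conj (idem_inv_mul a) (inv b)
      rwa [inv_inv'] at this
    have t3 := tmull hτ (inv b * (inv a * a) * b) hg0 hτf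
    have l4 : (inv b * (inv a * a) * b) * (inv b * b) = inv b * (inv a * a) * b := by
      calc (inv b * (inv a * a) * b) * (inv b * b)
          = inv b * ((inv a * a) * (b * (inv b * b))) := by simp only [mul_assoc]
        _ = inv b * ((inv a * a) * b) := by rw [sand1e]
        _ = inv b * (inv a * a) * b := by simp only [mul_assoc]
    rw [l4] at t3
    rw [l3] at t2
    have goal_eq : inv (a * b) * (a * b) = inv b * (inv a * a) * b := by
      simp only [inv_rev, mul_assoc]
    rw [goal_eq]
    exact ttrans hτ t2 t3
  · calc (a * b) * (e * f) = a * (b * (e * f)) := by simp only [mul_assoc]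
      _ = a * (e * f) := by rw [fix_below hbf hf he]
      _ = a * (f * e) := by rw [idem_comm he hf]
      _ = f * e := fix_below hae he hf
      _ = e * f := by rw [idem_comm hf he]

end Part4

namespace Part5
open InverseSemigroup InvAux Part2 Part3 Part4
variable {S : Type*} [InverseSemigroup S] {τ : S → S → Prop}

lemma cent_conj (hτ : IsECong τ) {a c : S} (ha : a ∈ centraliser τ)
    (hc : c ∈ normaliser τ) : c * a * inv c ∈ centraliser τ := by
  obtain ⟨haN, e, he, hτe, hae⟩ := ha
  have ha' : a ∈ centraliser τ := ⟨haN, e, he, hτe, hae⟩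
  refine ⟨norm_mul (norm_mul hc haN) (norm_inv hc), c * e * inv c, idem_conj he c, ?_, ?_⟩
  · have e1 := (hc _ _ hτe).1
    have e2 := centK2 hτ ha' (idem_inv_mul c)
    have e3 := (hc _ _ e2).1
    have q1 : inv (c * a * inv c) * (c * a * inv c)
        = c * (inv a * (inv c * c) * a) * inv c := by
      simp only [inv_rev, inv_inv', mul_assoc]
    have q2 : c * ((inv c * c) * (inv a * a)) * inv c = c * (inv a * a) * inv c := by
      calc c * ((inv c * c) * (inv a * a)) * inv c
          = c * (inv c * (c * ((inv a * a) * inv c))) := by simp only [mul_assoc]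
        _ = c * ((inv a * a) * inv c) := by rw [sand1]
        _ = c * (inv a * a) * inv c := by simp only [mul_assoc]
    rw [q2] at e3
    rw [q1]
    exact ttrans hτ e1 (tsymm hτ e3)
  · calc (c * a * inv c) * (c * e * inv c)
        = c * a * ((inv c * c) * e) * inv c := by simp only [mul_assoc]
      _ = c * a * (e * (inv c * c)) * inv c := by rw [idem_comm (idem_inv_mul c) he]
      _ = c * (a * e) * (inv c * (c * inv c)) := by simp only [mul_assoc]
      _ = c * (a * e) * inv c := by rw [sand2e]
      _ = c * e * inv c := by rw [hae]

lemma trace_conj (hτ : IsECong τ) {a b : S} (hbN : b ∈ normaliser τ)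
    (htr : τ (inv a * a) (inv b * b)) (hk : a * inv b ∈ centraliser τ)
    {h : S} (hh : IsIdem h) : τ (inv a * h * a) (inv b * h * b) := by
  have hK : IsIdem (inv a * h * a) := by
    have := idem_conj hh (inv a); rwa [inv_inv'] at this
  have hK2 : IsIdem ((inv a * h * a) * (inv b * b)) := mul_idem hK (idem_inv_mul b)
  have d1 := centK2 hτ hk hh
  have d2 := (hbN _ _ d1).2
  have l1 : inv b * (inv (a * inv b) * h * (a * inv b)) * b
      = (inv a * h * a) * (inv b * b) := by
    calc inv b * (inv (a * inv b) * h * (a * inv b)) * b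
        = (inv b * b) * ((inv a * h * a) * (inv b * b)) := by
          simp only [inv_rev, inv_inv', mul_assoc]
      _ = ((inv a * h * a) * (inv b * b)) * (inv b * b) := by
          rw [idem_comm (idem_inv_mul b) hK2]
      _ = (inv a * h * a) * ((inv b * b) * (inv b * b)) := by simp only [mul_assoc]
      _ = (inv a * h * a) * (inv b * b) := by
          rw [show (inv b * b) * (inv b * b) = inv b * b from idem_inv_mul b]
  have l2 : inv b * (h * (inv (a * inv b) * (a * inv b))) * b
      = (inv b * h * b) * ((inv a * a) * (inv b * b)) := by
    simp only [inv_rev, inv_inv', mul_assoc]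
  rw [l1, l2] at d2
  have d3 : τ ((inv a * h * a) * (inv b * b)) (inv a * h * a) := by
    have := tmull hτ (inv a * h * a) hK (tsymm hτ htr)
    have l3 : (inv a * h * a) * (inv a * a) = inv a * h * a := by
      calc (inv a * h * a) * (inv a * a) = inv a * (h * (a * (inv a * a))) := by
            simp only [mul_assoc]
        _ = inv a * (h * a) := by rw [sand1e]
        _ = inv a * h * a := by simp only [mul_assoc]
    rwa [l3] at this
  have d4 : τ ((inv b * h * b) * ((inv a * a) * (inv b * b))) (inv b * h * b) := by
    have hKb : IsIdem (inv b * h * b) := by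
      have := idem_conj hh (inv b); rwa [inv_inv'] at this
    have s1 : τ ((inv a * a) * (inv b * b)) (inv b * b) := by
      have := tmulr hτ (inv b * b) (idem_inv_mul b) htr
      rwa [show (inv b * b) * (inv b * b) = inv b * b from idem_inv_mul b] at this
    have := tmull hτ (inv b * h * b) hKb s1
    have l4 : (inv b * h * b) * (inv b * b) = inv b * h * b := by
      calc (inv b * h * b) * (inv b * b) = inv b * (h * (b * (inv b * b))) := by
            simp only [mul_assoc]
        _ = inv b * (h * b) := by rw [sand1e]
        _ = inv b * h * b := by simp only [mul_assoc]
    rwa [l4] at this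
  exact ttrans hτ (tsymm hτ d3) (ttrans hτ d2 d4)

lemma psi_trans_ker (hτ : IsECong τ) {a b c : S} (haN : a ∈ normaliser τ)
    (hcN : c ∈ normaliser τ) (htr1 : τ (inv a * a) (inv b * b))
    (hk1 : a * inv b ∈ centraliser τ) (hk2 : b * inv c ∈ centraliser τ) :
    a * inv c ∈ centraliser τ := by
  obtain ⟨hwN, e, he, hτe, hwe⟩ := cent_mul hτ hk1 hk2
  have hg : IsIdem (c * (inv b * b) * inv c) := idem_conj (idem_inv_mul b) c
  have hzg : (a * inv c) * (c * (inv b * b) * inv c) = (a * inv b) * (b * inv c) := by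
    calc (a * inv c) * (c * (inv b * b) * inv c)
        = a * ((inv c * c) * (inv b * b)) * inv c := by simp only [mul_assoc]
      _ = a * ((inv b * b) * (inv c * c)) * inv c := by
          rw [idem_comm (idem_inv_mul c) (idem_inv_mul b)]
      _ = a * (inv b * b) * (inv c * (c * inv c)) := by simp only [mul_assoc]
      _ = a * (inv b * b) * inv c := by rw [sand2e]
      _ = (a * inv b) * (b * inv c) := by simp only [mul_assoc]
  have hzge : (a * inv c) * ((c * (inv b * b) * inv c) * e) = e := by
    rw [← mul_assoc, hzg]; exact hwe
  have hge : (c * (inv b * b) * inv c) * e = e := by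
    have step : ((c * (inv b * b) * inv c) * e) * (c * (inv b * b) * inv c)
        = (c * (inv b * b) * inv c) * e := by
      rw [mul_assoc, idem_comm he hg, ← mul_assoc,
        show (c * (inv b * b) * inv c) * (c * (inv b * b) * inv c)
          = c * (inv b * b) * inv c from hg]
    have heg : e * (c * (inv b * b) * inv c) = e := by
      conv_lhs => rw [← hzge]
      rw [mul_assoc, step]
      exact hzge
    exact (idem_comm hg he).trans heg
  have hze : (a * inv c) * e = e := by
    rw [← hge]
    exact hzge.trans hge.symm
  refine ⟨norm_mul haN (norm_inv hcN), e, he, ?_, hze⟩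
  · have p1 : τ ((inv a * a) * (inv b * b)) (inv a * a) := by
      have := tmull hτ (inv a * a) (idem_inv_mul a) (tsymm hτ htr1)
      rwa [show (inv a * a) * (inv a * a) = inv a * a from idem_inv_mul a] at this
    have p2 := (hcN _ _ p1).1
    have q1 : inv ((a * inv b) * (b * inv c)) * ((a * inv b) * (b * inv c))
        = c * ((inv a * a) * (inv b * b)) * inv c := by
      calc inv ((a * inv b) * (b * inv c)) * ((a * inv b) * (b * inv c))
          = c * ((inv b * b) * (inv a * a)) * ((inv b * b) * inv c) := by
            simp only [inv_rev, inv_inv', mul_assoc]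
        _ = c * ((inv a * a) * (inv b * b)) * ((inv b * b) * inv c) := by
            rw [idem_comm (idem_inv_mul b) (idem_inv_mul a)]
        _ = c * (inv a * a) * ((inv b * b) * ((inv b * b) * inv c)) := by
            simp only [mul_assoc]
        _ = c * (inv a * a) * ((inv b * b) * inv c) := by
            rw [idem_dup (idem_inv_mul b)]
        _ = c * ((inv a * a) * (inv b * b)) * inv c := by simp only [mul_assoc]
    have q2 : inv (a * inv c) * (a * inv c) = c * (inv a * a) * inv c := by
      simp only [inv_rev, inv_inv', mul_assoc]
    rw [q1] at hτe
    rw [q2]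
    exact ttrans hτ hτe p2

end Part5

/-- ψ is a two-sided congruence on N(τ). -/
theorem stmt11 {S : Type*} [InverseSemigroup S] (τ : S → S → Prop)
    (hτ : IsECong τ) :
    let N := normaliser τ
    let ψ : S → S → Prop := fun a b =>
      a ∈ N ∧ b ∈ N ∧ τ (inv a * a) (inv b * b) ∧ a * inv b ∈ centraliser τ
    (∀ a ∈ N, ψ a a) ∧
    (∀ a b, ψ a b → ψ b a) ∧
    (∀ a b c, ψ a b → ψ b c → ψ a c) ∧
    (∀ a b c, c ∈ N → ψ a b → ψ (c * a) (c * b) ∧ ψ (a * c) (b * c)) := by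
  open InvAux Part2 Part3 Part4 Part5 in
  intro N ψ
  refine ⟨?_, ?_, ?_, ?_⟩
  · intro a ha
    exact ⟨ha, ha, trefl hτ (idem_inv_mul a), idem_mem_cent hτ (idem_mul_inv a)⟩
  · rintro a b ⟨haN, hbN, htr, hk⟩
    refine ⟨hbN, haN, tsymm hτ htr, ?_⟩
    have := cent_inv hτ hk
    rwa [inv_rev, inv_inv'] at this
  · rintro a b c ⟨haN, hbN, htr1, hk1⟩ ⟨hbN', hcN, htr2, hk2⟩
    exact ⟨haN, hcN, ttrans hτ htr1 htr2, psi_trans_ker hτ haN hcN htr1 hk1 hk2⟩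
  · rintro a b c hc ⟨haN, hbN, htr, hk⟩
    constructor
    · refine ⟨norm_mul hc haN, norm_mul hc hbN, ?_, ?_⟩
      · have h := trace_conj hτ hbN htr hk (idem_inv_mul c)
        have e1 : inv (c * a) * (c * a) = inv a * (inv c * c) * a := by
          simp only [inv_rev, mul_assoc]
        have e2 : inv (c * b) * (c * b) = inv b * (inv c * c) * b := by
          simp only [inv_rev, mul_assoc]
        rw [e1, e2]; exact h
      · have h := cent_conj hτ hk hc
        have e3 : (c * a) * inv (c * b) = c * (a * inv b) * inv c := by
          simp only [inv_rev, mul_assoc]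
        rw [e3]; exact h
    · refine ⟨norm_mul haN hc, norm_mul hbN hc, ?_, ?_⟩
      · have h := (hc _ _ htr).2
        have e1 : inv (a * c) * (a * c) = inv c * (inv a * a) * c := by
          simp only [inv_rev, mul_assoc]
        have e2 : inv (b * c) * (b * c) = inv c * (inv b * b) * c := by
          simp only [inv_rev, mul_assoc]
        rw [e1, e2]; exact h
      · have hcc := idem_conj (idem_mul_inv c) a
        have h := cent_mul hτ (idem_mem_cent hτ hcc) hk
        have e3 : (a * (c * inv c) * inv a) * (a * inv b) = (a * c) * inv (b * c) := by
          calc (a * (c * inv c) * inv a) * (a * inv b)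
              = a * ((c * inv c) * (inv a * a)) * inv b := by simp only [mul_assoc]
            _ = a * ((inv a * a) * (c * inv c)) * inv b := by
                rw [idem_comm (idem_mul_inv c) (idem_inv_mul a)]
            _ = (a * (inv a * a)) * ((c * inv c) * inv b) := by simp only [mul_assoc]
            _ = a * ((c * inv c) * inv b) := by rw [sand1e]
            _ = (a * c) * inv (b * c) := by simp only [inv_rev, mul_assoc]
        rw [← e3]; exact h
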